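/- Let f : ℓ → ℂ be such that the family α ↦ (α!/|α|!) |f_α|^2 is summable. For j ≥ 1 define (𝓡_j f)_β = ((β_j + 1)/(|β| + 1)) f_{β + e_j}. Then the double family (j, β) ↦ (β!/|β|!) ((β_j + 1)/(|β| + 1))^2 |f_{β + e_j}|^2, indexed by pairs (j, β) with j ≥ 1 and β ∈ ℓ, is summable and Σ_{j ≥ 1} Σ_{β ∈ ℓ} (β!/|β|!) ((β_j + 1)/(|β| + 1))^2 |f_{β + e_j}|^2 = Σ_{α ∈ ℓ, α ≠ 0} (α!/|α|!) |f_α|^2. -/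

import Mathlib

private lemma sum_add_single14 (β : ℕ →₀ ℕ) (j : ℕ) :
    ((β + Finsupp.single j 1).sum fun _ n => n) = (β.sum fun _ n => n) + 1 := by
  rw [Finsupp.sum_add_index' (fun _ => rfl) (fun _ _ _ => rfl), Finsupp.sum_single_index rfl]

private lemma prod_add_single14 (β : ℕ →₀ ℕ) (j : ℕ) :
    ((β + Finsupp.single j 1).prod fun _ n => (n.factorial : ℝ))
      = ((β j : ℝ) + 1) * β.prod fun _ n => (n.factorial : ℝ) := by
  rw [← Finsupp.mul_prod_erase' (β + Finsupp.single j 1) j _ (by simp),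
      ← Finsupp.mul_prod_erase' β j _ (by simp)]
  have h : Finsupp.erase j (β + Finsupp.single j 1) = Finsupp.erase j β := by
    rw [Finsupp.erase_add, Finsupp.erase_single, add_zero]
  rw [h, Finsupp.add_apply, Finsupp.single_apply, if_pos rfl]
  push_cast [Nat.factorial_succ]
  ring

private lemma tsum_coe14 (α : ℕ →₀ ℕ) :
    ∑' j : ℕ, ((α j : ℝ)) = ((α.sum fun _ n => n : ℕ) : ℝ) := by
  rw [tsum_eq_sum (s := α.support) (fun j hj => by
    simpa using Finsupp.notMem_support_iff.mp hj)]
  rw [Finsupp.sum]; push_cast; rfl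

private lemma sum_ne_zero14 {α : ℕ →₀ ℕ} (h : α ≠ 0) : (α.sum fun _ n => n) ≠ 0 := by
  intro h0
  apply h
  ext j
  simp only [Finsupp.coe_zero, Pi.zero_apply]
  by_cases hj : j ∈ α.support
  · exact Finset.sum_eq_zero_iff.mp h0 j hj
  · exact Finsupp.notMem_support_iff.mp hj

private noncomputable def D14 (f : (ℕ →₀ ℕ) → ℂ) (α : ℕ →₀ ℕ) : ℝ :=
  (α.prod fun _ n => (n.factorial : ℝ)) / ((α.sum fun _ n => n).factorial : ℝ) * ‖f α‖ ^ 2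

private noncomputable def F14 (f : (ℕ →₀ ℕ) → ℂ) (q : ℕ × (ℕ →₀ ℕ)) : ℝ :=
  (q.2.prod fun _ n => (n.factorial : ℝ)) / ((q.2.sum fun _ n => n).factorial : ℝ) *
    ((q.2 q.1 : ℝ) / ((q.2.sum fun _ n => n : ℕ) : ℝ)) * ‖f q.2‖ ^ 2

private noncomputable def T14 (f : (ℕ →₀ ℕ) → ℂ) (p : ℕ × (ℕ →₀ ℕ)) : ℝ :=
  (p.2.prod fun _ n => (n.factorial : ℝ)) / ((p.2.sum fun _ n => n).factorial : ℝ) *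
    (((p.2 p.1 : ℝ) + 1) / (((p.2.sum fun _ n => n : ℕ) : ℝ) + 1)) ^ 2 *
    ‖f (p.2 + Finsupp.single p.1 1)‖ ^ 2

private noncomputable def ι14 (p : ℕ × (ℕ →₀ ℕ)) : ℕ × (ℕ →₀ ℕ) := (p.1, p.2 + Finsupp.single p.1 1)

private lemma ιinj14 : Function.Injective ι14 := by
  rintro ⟨j₁, β₁⟩ ⟨j₂, β₂⟩ h
  simp only [ι14, Prod.mk.injEq] at h
  obtain ⟨rfl, h2⟩ := h
  exact Prod.ext rfl (add_right_cancel h2)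

private lemma key14 (f : (ℕ →₀ ℕ) → ℂ) (p : ℕ × (ℕ →₀ ℕ)) : T14 f p = F14 f (ι14 p) := by
  obtain ⟨j, β⟩ := p
  simp only [T14, F14, ι14, prod_add_single14, sum_add_single14,
    Finsupp.add_apply, Finsupp.single_apply, if_pos rfl]
  have hs0 : ((β.sum fun _ n => n : ℕ) : ℝ) + 1 ≠ 0 := by positivity
  have hf0 : ((β.sum fun _ n => n).factorial : ℝ) ≠ 0 := by
    exact_mod_cast (Nat.factorial_ne_zero _)
  push_cast [Nat.factorial_succ]
  field_simp

private lemma Fnonneg14 (f : (ℕ →₀ ℕ) → ℂ) (q : ℕ × (ℕ →₀ ℕ)) : 0 ≤ F14 f q := by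
  obtain ⟨j, α⟩ := q
  simp only [F14]
  have h1 : (0:ℝ) ≤ α.prod fun _ n => (n.factorial : ℝ) :=
    Finset.prod_nonneg fun i _ => by positivity
  have h2 : (0:ℝ) ≤ (α j : ℝ) / ((α.sum fun _ n => n : ℕ) : ℝ) := by positivity
  have h3 : (0:ℝ) ≤ (α.prod fun _ n => (n.factorial : ℝ)) /
      ((α.sum fun _ n => n).factorial : ℝ) := div_nonneg h1 (by positivity)
  exact mul_nonneg (mul_nonneg h3 h2) (sq_nonneg _)

private lemma Fzero14 (f : (ℕ →₀ ℕ) → ℂ) (q : ℕ × (ℕ →₀ ℕ)) (h : q.2 q.1 = 0) :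
    F14 f q = 0 := by
  obtain ⟨j, α⟩ := q
  simp only [F14] at *
  simp [h]

private lemma jsum14 (f : (ℕ →₀ ℕ) → ℂ) (α : ℕ →₀ ℕ) :
    Summable fun j => F14 f (j, α) := by
  apply summable_of_ne_finset_zero (s := α.support)
  intro j hj
  exact Fzero14 f (j, α) (Finsupp.notMem_support_iff.mp hj)

private lemma inner14 (f : (ℕ →₀ ℕ) → ℂ) (α : ℕ →₀ ℕ) :
    (∑' j, F14 f (j, α)) = Set.indicator {a : ℕ →₀ ℕ | a ≠ 0} (D14 f) α := by
  have hrw : ∀ j : ℕ, F14 f (j, α)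
      = ((α.prod fun _ n => (n.factorial : ℝ)) / ((α.sum fun _ n => n).factorial : ℝ) *
          ‖f α‖ ^ 2 / ((α.sum fun _ n => n : ℕ) : ℝ)) * (α j : ℝ) := by
    intro j; simp only [F14]; ring
  rw [tsum_congr hrw, tsum_mul_left, tsum_coe14]
  by_cases h0 : α = 0
  · subst h0; simp
  · have hs : ((α.sum fun _ n => n : ℕ) : ℝ) ≠ 0 := by
      exact_mod_cast sum_ne_zero14 h0
    rw [Set.indicator_of_mem (show α ∈ {a : ℕ →₀ ℕ | a ≠ 0} from h0),
      div_mul_cancel₀ _ hs]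
    rfl

/-- Coefficient form of the identity `Σ_k M_{z_k} M_{z_k}^* = I − C^*C` in the Arveson
space: `Σ_{j} Σ_{β} (β!/|β|!) ((β_j+1)/(|β|+1))² |f_{β+e_j}|² = Σ_{α ≠ 0} (α!/|α|!) |f_α|²`. -/
theorem stmt14 (f : (ℕ →₀ ℕ) → ℂ)
    (hf : Summable fun α : ℕ →₀ ℕ =>
      (α.prod fun _ n => (n.factorial : ℝ)) / ((α.sum fun _ n => n).factorial : ℝ) *
        ‖f α‖ ^ 2) :
    Summable (fun p : ℕ × (ℕ →₀ ℕ) =>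
      (p.2.prod fun _ n => (n.factorial : ℝ)) / ((p.2.sum fun _ n => n).factorial : ℝ) *
        (((p.2 p.1 : ℝ) + 1) / (((p.2.sum fun _ n => n : ℕ) : ℝ) + 1)) ^ 2 *
        ‖f (p.2 + Finsupp.single p.1 1)‖ ^ 2) ∧
    (∑' p : ℕ × (ℕ →₀ ℕ),
        (p.2.prod fun _ n => (n.factorial : ℝ)) / ((p.2.sum fun _ n => n).factorial : ℝ) *
          (((p.2 p.1 : ℝ) + 1) / (((p.2.sum fun _ n => n : ℕ) : ℝ) + 1)) ^ 2 *
          ‖f (p.2 + Finsupp.single p.1 1)‖ ^ 2) =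
      ∑' α : {α : ℕ →₀ ℕ // α ≠ 0},
        (α.1.prod fun _ n => (n.factorial : ℝ)) / ((α.1.sum fun _ n => n).factorial : ℝ) *
          ‖f α.1‖ ^ 2 := by
  have hfD : Summable (D14 f) := hf
  have hGsum : Summable fun q : (ℕ →₀ ℕ) × ℕ => F14 f (q.2, q.1) := by
    rw [summable_prod_of_nonneg (fun q => Fnonneg14 f _)]
    refine ⟨fun α => jsum14 f α, ?_⟩
    simp only [inner14 f]
    exact hfD.indicator _
  have hFsum : Summable (F14 f) :=
    (Equiv.prodComm ℕ (ℕ →₀ ℕ)).summable_iff.mpr hGsum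
  have hTsum : Summable (T14 f) :=
    (hFsum.comp_injective ιinj14).congr fun p => (key14 f p).symm
  have hvanish : Function.support (F14 f) ⊆ Set.range ι14 := by
    rintro ⟨j, α⟩ hq
    have h : α j ≠ 0 := fun h0 => hq (Fzero14 f _ h0)
    have hle : Finsupp.single j 1 ≤ α :=
      Finsupp.single_le_iff.mpr (Nat.one_le_iff_ne_zero.mpr h)
    exact ⟨(j, α - Finsupp.single j 1),
      Prod.ext rfl (tsub_add_cancel_of_le hle)⟩
  refine ⟨hTsum, ?_⟩
  show (∑' p, T14 f p) = ∑' α : {α : ℕ →₀ ℕ // α ≠ 0}, D14 f α.1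
  calc (∑' p, T14 f p) = ∑' p, F14 f (ι14 p) := tsum_congr (key14 f)
    _ = ∑' q, F14 f q := ιinj14.tsum_eq hvanish
    _ = ∑' q : (ℕ →₀ ℕ) × ℕ, F14 f (q.2, q.1) :=
        (Equiv.prodComm ℕ (ℕ →₀ ℕ)).tsum_eq fun q : (ℕ →₀ ℕ) × ℕ => F14 f (q.2, q.1)
    _ = ∑' α, ∑' j, F14 f (j, α) := hGsum.tsum_prod' (fun α => jsum14 f α)
    _ = ∑' α, Set.indicator {a : ℕ →₀ ℕ | a ≠ 0} (D14 f) α := tsum_congr (inner14 f)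
    _ = ∑' α : {α : ℕ →₀ ℕ // α ≠ 0}, D14 f α.1 := (tsum_subtype _ (D14 f)).symm
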